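/- Let N ≥ 1, 2 < q < p̄ = 2+4/N, and 0 < a < ā_N (where ā_N is the critical mass), and μ > 0. Then the energy E_μ(u) = ∫(½|∇u|² − (1/p̄)|u|^{p̄} − (μ/q)|u|^q) is coercive on S_a = {u ∈ H¹ : |u|₂ = a}: there are constants c₁ > 0, c₂ ≥ 0 and an exponent 0 < θ < 2 such that E_μ(u) ≥ c₁|∇u|₂² − c₂|∇u|₂^θ for all u ∈ S_a, and consequently m(a,μ) = inf_{S_a} E_μ > −∞. Moreover m(a,μ) < 0. -/

import Mathlib

open Real Set

lemma aux_rpow (θ ε t : ℝ) (hθ0 : 0 < θ) (hθ2 : θ < 2) (hε : 0 < ε) (ht : 0 ≤ t) :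
    t ^ θ ≤ ε * t ^ 2 + ε ^ (-θ / (2 - θ)) := by
  have h2θ : 0 < 2 - θ := by linarith
  set T : ℝ := ε ^ (-1 / (2 - θ)) with hT
  have hTpos : 0 < T := Real.rpow_pos_of_pos hε _
  have hTθ : T ^ θ = ε ^ (-θ / (2 - θ)) := by
    rw [hT, ← Real.rpow_mul hε.le]
    ring_nf
  rcases le_or_gt t T with h | h
  · have h1 : t ^ θ ≤ T ^ θ := Real.rpow_le_rpow ht h hθ0.le
    have h2 : 0 ≤ ε * t ^ 2 := by positivity
    linarith [hTθ ▸ h1]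
  · have ht0 : 0 < t := hTpos.trans h
    have h1 : t ^ θ = t ^ 2 * t ^ (θ - 2) := by
      rw [← Real.rpow_two, ← Real.rpow_add ht0]; ring_nf
    have h2 : t ^ (θ - 2) ≤ T ^ (θ - 2) :=
      Real.rpow_le_rpow_of_nonpos hTpos h.le (by linarith)
    have h3 : T ^ (θ - 2) = ε := by
      rw [hT, ← Real.rpow_mul hε.le]
      have : -1 / (2 - θ) * (θ - 2) = 1 := by field_simp; ring
      rw [this, Real.rpow_one]
    have h5 : 0 ≤ ε ^ (-θ / (2 - θ)) := (Real.rpow_pos_of_pos hε _).le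
    have h6 : (0:ℝ) ≤ t ^ 2 := by positivity
    nlinarith [mul_le_mul_of_nonneg_left (h3 ▸ h2) h6]


/-- Coercivity and negativity of the infimum of
`E_μ(u) = ½|∇u|₂² − (1/p̄)|u|_{p̄}^{p̄} − (μ/q)|u|_q^q` on `S_a` when
`2 < q < p̄ = 2+4/N`, `0 < a < ā_N` and `μ > 0`.  Here `X` abstracts the sphere `S_a`,
`Gn u = |∇u|₂`, `Qn u = |u|_q`, `Pn u = |u|_{p̄}`, the Gagliardo–Nirenberg inequalities
with optimal constants are hypotheses (`γ_{p̄} = 2/p̄`), `ā_N = (p̄/(2C_{N,p̄}^{p̄}))^{N/4}`,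
and `dil` is the mass-preserving dilation `s ⋆ u`. Conclusion: `E_μ ≥ c₁|∇u|₂² − c₂|∇u|₂^θ`
with `c₁ > 0`, `c₂ ≥ 0`, `0 < θ < 2`; hence `m(a,μ) = inf E_μ > −∞`; moreover `m(a,μ) < 0`. -/
theorem stmt9 (N : ℕ) (hN : 1 ≤ N) (q a μ pbar γq Cq Cpbar aN : ℝ)
    (hpbar : pbar = 2 + 4 / (N : ℝ))
    (hγq : γq = (N : ℝ) * (q - 2) / (2 * q))
    (hq : 2 < q) (hqp : q < pbar)
    (hCq : 0 < Cq) (hCpbar : 0 < Cpbar)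
    (haN : aN = (pbar / (2 * Cpbar ^ pbar)) ^ ((N : ℝ) / 4))
    (ha : 0 < a) (ha' : a < aN) (hμ : 0 < μ)
    (X : Type) [Nonempty X]
    (Gn Qn Pn E : X → ℝ) (dil : ℝ → X → X)
    (hGn : ∀ u, 0 ≤ Gn u) (hQn : ∀ u, 0 < Qn u) (hPn : ∀ u, 0 ≤ Pn u)
    (hGNq : ∀ u, Qn u ≤ Cq * Gn u ^ γq * a ^ (1 - γq))
    (hGNp : ∀ u, Pn u ≤ Cpbar * Gn u ^ (2 / pbar) * a ^ (1 - 2 / pbar))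
    (hE : ∀ u, E u = Gn u ^ 2 / 2 - Pn u ^ pbar / pbar - μ * Qn u ^ q / q)
    (hdilG : ∀ s u, Gn (dil s u) = Real.exp s * Gn u)
    (hdilQ : ∀ s u, Qn (dil s u) ^ q = Real.exp (q * γq * s) * Qn u ^ q)
    (hdilP : ∀ s u, Pn (dil s u) ^ pbar = Real.exp (2 * s) * Pn u ^ pbar) :
    (∃ c₁ : ℝ, 0 < c₁ ∧ ∃ c₂ : ℝ, 0 ≤ c₂ ∧ ∃ θ : ℝ, 0 < θ ∧ θ < 2 ∧
        ∀ u, c₁ * Gn u ^ 2 - c₂ * Gn u ^ θ ≤ E u) ∧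
      BddBelow (Set.range E) ∧
      sInf (Set.range E) < 0 := by
  have hN0 : (0:ℝ) < (N:ℝ) := by exact_mod_cast hN
  have hpbar2 : 2 < pbar := by
    rw [hpbar]; have : 0 < 4 / (N:ℝ) := by positivity
    linarith
  have hpbar0 : 0 < pbar := by linarith
  have hq0 : 0 < q := by linarith
  -- θ
  set θ : ℝ := q * γq with hθdef
  have hθval : θ = (N:ℝ) * (q - 2) / 2 := by
    rw [hθdef, hγq]; field_simp
  have hθ0 : 0 < θ := by
    have hq2 : 0 < q - 2 := by linarith
    rw [hθval]; positivity
  have hθ2 : θ < 2 := by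
    have hq4 : q - 2 < 4 / (N:ℝ) := by rw [hpbar] at hqp; linarith
    have h := (lt_div_iff₀ hN0).mp hq4
    rw [hθval]; nlinarith
  -- constants
  have hCpp : 0 < Cpbar ^ pbar := Real.rpow_pos_of_pos hCpbar _
  set k : ℝ := Cpbar ^ pbar * a ^ (pbar - 2) / pbar with hk
  set c₁ : ℝ := 1 / 2 - k with hc₁
  set c₂ : ℝ := μ * Cq ^ q * a ^ ((1 - γq) * q) / q with hc₂
  have hc₂pos : 0 < c₂ := by
    have : 0 < Cq ^ q := Real.rpow_pos_of_pos hCq _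
    have : 0 < a ^ ((1 - γq) * q) := Real.rpow_pos_of_pos ha _
    rw [hc₂]; positivity
  -- a ^ (pbar - 2) < pbar / (2 * Cpbar ^ pbar)
  have hapb : a ^ (pbar - 2) < pbar / (2 * Cpbar ^ pbar) := by
    have h42 : pbar - 2 = 4 / (N:ℝ) := by rw [hpbar]; ring
    have hlt : a ^ (pbar - 2) < aN ^ (pbar - 2) :=
      Real.rpow_lt_rpow ha.le ha' (by linarith)
    have haNval : aN ^ (pbar - 2) = pbar / (2 * Cpbar ^ pbar) := by
      rw [haN, ← Real.rpow_mul (by positivity), h42]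
      have : (N:ℝ) / 4 * (4 / (N:ℝ)) = 1 := by field_simp
      rw [this, Real.rpow_one]
    rwa [haNval] at hlt
  have hc₁pos : 0 < c₁ := by
    have h1 : Cpbar ^ pbar * (pbar / (2 * Cpbar ^ pbar)) = pbar / 2 := by
      field_simp
    have h2 := mul_lt_mul_of_pos_left hapb hCpp
    rw [h1] at h2
    rw [hc₁, hk, sub_pos, div_lt_iff₀ hpbar0]
    linarith
  -- key estimate
  have key : ∀ u, c₁ * Gn u ^ 2 - c₂ * Gn u ^ θ ≤ E u := by
    intro u
    have hGnu := hGn u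
    have hP : Pn u ^ pbar ≤ Cpbar ^ pbar * Gn u ^ 2 * a ^ (pbar - 2) := by
      have h1 : Pn u ^ pbar ≤ (Cpbar * Gn u ^ (2 / pbar) * a ^ (1 - 2 / pbar)) ^ pbar :=
        Real.rpow_le_rpow (hPn u) (hGNp u) hpbar0.le
      have h2 : (Cpbar * Gn u ^ (2 / pbar) * a ^ (1 - 2 / pbar)) ^ pbar
          = Cpbar ^ pbar * Gn u ^ 2 * a ^ (pbar - 2) := by
        rw [Real.mul_rpow (by positivity) (by positivity),
            Real.mul_rpow (by positivity) (by positivity),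
            ← Real.rpow_natCast (Gn u) 2, ← Real.rpow_mul hGnu, ← Real.rpow_mul ha.le]
        have e1 : 2 / pbar * pbar = (2:ℝ) := by field_simp
        have e2 : (1 - 2 / pbar) * pbar = pbar - 2 := by field_simp
        rw [e1, e2]; norm_num
      linarith
    have hQ : Qn u ^ q ≤ Cq ^ q * Gn u ^ θ * a ^ ((1 - γq) * q) := by
      have h1 : Qn u ^ q ≤ (Cq * Gn u ^ γq * a ^ (1 - γq)) ^ q :=
        Real.rpow_le_rpow (hQn u).le (hGNq u) hq0.le
      have h2 : (Cq * Gn u ^ γq * a ^ (1 - γq)) ^ q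
          = Cq ^ q * Gn u ^ θ * a ^ ((1 - γq) * q) := by
        rw [Real.mul_rpow (by positivity) (by positivity),
            Real.mul_rpow (by positivity) (by positivity),
            ← Real.rpow_mul hGnu, ← Real.rpow_mul ha.le, hθdef, mul_comm γq q]
      linarith
    rw [hE u, hc₁, hk, hc₂]
    have h3 : Pn u ^ pbar / pbar ≤ Cpbar ^ pbar * a ^ (pbar - 2) / pbar * Gn u ^ 2 := by
      rw [div_le_iff₀ hpbar0]
      calc Pn u ^ pbar ≤ Cpbar ^ pbar * Gn u ^ 2 * a ^ (pbar - 2) := hP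
        _ = Cpbar ^ pbar * a ^ (pbar - 2) / pbar * Gn u ^ 2 * pbar := by
            field_simp
    have h4 : μ * Qn u ^ q / q ≤ μ * Cq ^ q * a ^ ((1 - γq) * q) / q * Gn u ^ θ := by
      rw [div_le_iff₀ hq0]
      calc μ * Qn u ^ q ≤ μ * (Cq ^ q * Gn u ^ θ * a ^ ((1 - γq) * q)) :=
            mul_le_mul_of_nonneg_left hQ hμ.le
        _ = μ * Cq ^ q * a ^ ((1 - γq) * q) / q * Gn u ^ θ * q := by
            field_simp
    linarith
  clear_value θ k c₁ c₂
  have hbdd : BddBelow (Set.range E) := by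
    refine ⟨-(c₂ * (c₁ / c₂) ^ (-θ / (2 - θ))), ?_⟩
    rintro x ⟨u, rfl⟩
    have haux := aux_rpow θ (c₁ / c₂) (Gn u) hθ0 hθ2 (by positivity) (hGn u)
    have h := mul_le_mul_of_nonneg_left haux hc₂pos.le
    have he : c₂ * (c₁ / c₂ * Gn u ^ 2 + (c₁ / c₂) ^ (-θ / (2 - θ)))
        = c₁ * Gn u ^ 2 + c₂ * (c₁ / c₂) ^ (-θ / (2 - θ)) := by
      field_simp
    rw [he] at h
    linarith [key u]
  refine ⟨⟨c₁, hc₁pos, c₂, hc₂pos.le, θ, hθ0, hθ2, key⟩, hbdd, ?_⟩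
  · -- sInf < 0
    obtain ⟨u₀⟩ := ‹Nonempty X›
    set A : ℝ := Gn u₀ ^ 2 / 2 - Pn u₀ ^ pbar / pbar with hA
    set B : ℝ := μ * Qn u₀ ^ q / q with hB
    have hBpos : 0 < B := by
      have := Real.rpow_pos_of_pos (hQn u₀) q
      rw [hB]; positivity
    have hEdil : ∀ s, E (dil s u₀) = Real.exp (2 * s) * A - Real.exp (θ * s) * B := by
      intro s
      have hG2 : (Real.exp s * Gn u₀) ^ 2 = Real.exp (2 * s) * Gn u₀ ^ 2 := by
        rw [two_mul, Real.exp_add]; ring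
      rw [hE, hdilG, hG2, hdilQ, hdilP, hA, hB]
      ring
    clear_value A B
    have hexists : ∃ s, E (dil s u₀) < 0 := by
      rcases le_or_gt A 0 with hA0 | hA0
      · refine ⟨0, ?_⟩
        rw [hEdil]; simp only [mul_zero, Real.exp_zero, one_mul]
        nlinarith
      · refine ⟨Real.log (B / (2 * A)) / (2 - θ), ?_⟩
        set s := Real.log (B / (2 * A)) / (2 - θ) with hs
        have h2θ : 0 < 2 - θ := by linarith
        have hexp : Real.exp ((2 - θ) * s) = B / (2 * A) := by
          rw [hs, mul_div_cancel₀ _ (ne_of_gt h2θ), Real.exp_log (by positivity)]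
        clear_value s
        have hsplit : Real.exp (2 * s) = Real.exp (θ * s) * Real.exp ((2 - θ) * s) := by
          rw [← Real.exp_add]; ring_nf
        rw [hEdil, hsplit, hexp]
        have hBA : B / (2 * A) * A = B / 2 := by field_simp
        have hexpθ : 0 < Real.exp (θ * s) := Real.exp_pos _
        calc Real.exp (θ * s) * (B / (2 * A)) * A - Real.exp (θ * s) * B
            = Real.exp (θ * s) * (B / (2 * A) * A - B) := by ring
          _ = Real.exp (θ * s) * (-(B / 2)) := by rw [hBA]; ring
          _ < 0 := mul_neg_of_pos_of_neg hexpθ (by linarith)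
    obtain ⟨s, hsneg⟩ := hexists
    exact lt_of_le_of_lt (csInf_le hbdd ⟨dil s u₀, rfl⟩) hsneg
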